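/- Expand e^{ρ_{n−1}} ∏_{i=1}^n (1 − e^{−ε_1−ε_i}) = Σ_{A ⊆ {1,…,n}} (−1)^{|A|} e^{λ_A}, where ρ_{n−1} = −Σ_{i=1}^{n−1} i ε_{i+1} and λ_A = ρ_{n−1} − Σ_{i∈A}(ε_1 + ε_i). Then: (a) if n is odd, λ_A is regular (has pairwise distinct coordinates) only for A = ∅ and A = {1,…,n}; (b) if n is even, there are exactly four regular λ_A, corresponding to A = ∅, A = {1,…,n}, A = {n/2+1, …, n}, and A' = {1} ∪ {n/2+2, …, n}, and the latter two differ by a transposition of two coordinates, so their signed contributions to Σ_{w} sgn(w) e^{w(·)} cancel. -/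

import Mathlib

open Finset

private lemma cardf (n m : ℕ) : (univ.filter fun i : Fin n => m ≤ i.val).card = n - m := by
  rcases lt_or_ge m n with h | h
  · have he : (univ.filter fun i : Fin n => m ≤ i.val) = Finset.Ici ⟨m, h⟩ := by
      ext i; simp [Fin.le_def]
    rw [he]
    simpa using Fin.card_Ici (⟨m, h⟩ : Fin n)
  · have he : (univ.filter fun i : Fin n => m ≤ i.val) = ∅ := by
      ext i; simp; omega
    rw [he]; simp; omega

private lemma cardA1 (n : ℕ) (hn : 2 ≤ n) :
    (univ.filter fun i : Fin n => i.val = 0 ∨ n / 2 + 1 ≤ i.val).card = n - n / 2 := by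
  classical
  rw [Finset.filter_or, Finset.card_union_of_disjoint]
  · have h1 : (univ.filter fun i : Fin n => i.val = 0) = {(⟨0, by omega⟩ : Fin n)} := by
      ext i; simp [Fin.ext_iff]
    rw [h1, cardf, Finset.card_singleton]
    omega
  · rw [Finset.disjoint_left]
    intro a ha hb
    simp only [Finset.mem_filter, Finset.mem_univ, true_and] at ha hb
    omega

private lemma prodsingle (n : ℕ) (s : Finset (Fin n)) (g : Fin n → (Fin n → ℤ)) (r : ℚ) :
    ∏ i ∈ s, AddMonoidAlgebra.single (g i) r
      = AddMonoidAlgebra.single (∑ i ∈ s, g i) (r ^ s.card) := by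
  classical
  induction s using Finset.cons_induction with
  | empty => simp [AddMonoidAlgebra.one_def]
  | cons a s ha ih =>
      rw [Finset.prod_cons, ih, AddMonoidAlgebra.single_mul_single, Finset.sum_cons,
        Finset.card_cons, pow_succ']

private lemma charlem (n : ℕ) (hn : 2 ≤ n) (A : Finset (Fin n)) (f : Fin n → ℤ)
    (hf : ∀ j : Fin n, f j = -(j.val : ℤ) - (if j.val = 0 then (A.card : ℤ) else 0)
      - (if j ∈ A then 1 else 0)) :
    Function.Injective f ↔
      A = ∅ ∨ A = univ ∨ (n % 2 = 0 ∧
        (A = univ.filter (fun i : Fin n => n / 2 ≤ i.val) ∨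
         A = univ.filter (fun i : Fin n => i.val = 0 ∨ n / 2 + 1 ≤ i.val))) := by
  classical
  constructor
  · intro hinj
    set z : Fin n := ⟨0, by omega⟩ with hz
    have hzv : z.val = 0 := rfl
    have hup : ∀ k : ℕ, 1 ≤ k → ∀ (hk2 : k + 1 < n),
        (⟨k, by omega⟩ : Fin n) ∈ A → (⟨k + 1, hk2⟩ : Fin n) ∈ A := by
      intro k hk1 hk2 hkA
      by_contra hnot
      have key : f ⟨k, by omega⟩ = f ⟨k + 1, hk2⟩ := by
        rw [hf, hf, if_pos hkA, if_neg hnot, if_neg (show ¬(k = 0) by omega),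
          if_neg (show ¬(k + 1 = 0) by omega)]
        push_cast
        ring
      have h2 : k = k + 1 := by
        have := hinj key
        simpa [Fin.ext_iff] using this
      omega
    set m : ℕ := if hE : (A.erase z).Nonempty then ((A.erase z).min' hE).val else n with hm
    have hm1 : 1 ≤ m := by
      rw [hm]
      split
      next hE =>
        have h' := Finset.min'_mem _ hE
        rw [Finset.mem_erase] at h'
        have h2 : ((A.erase z).min' hE).val ≠ 0 := fun h0 => h'.1 (Fin.ext (h0.trans hzv.symm))
        omega
      next => omega
    have hmn : m ≤ n := by
      rw [hm]
      split
      next hE => exact le_of_lt ((A.erase z).min' hE).isLt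
      next => exact le_refl n
    have hupmem : ∀ l : ℕ, m ≤ l → ∀ (h : l < n), (⟨l, h⟩ : Fin n) ∈ A := by
      intro l hml
      induction l, hml using Nat.le_induction with
      | base =>
        intro h
        by_cases hE : (A.erase z).Nonempty
        · have hveq : m = ((A.erase z).min' hE).val := by rw [hm, dif_pos hE]
          have he : (⟨m, h⟩ : Fin n) = (A.erase z).min' hE := Fin.ext hveq
          rw [he]
          exact Finset.mem_of_mem_erase (Finset.min'_mem _ hE)
        · exfalso
          rw [hm, dif_neg hE] at h
          exact absurd h (lt_irrefl n)
      | succ l hml ih =>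
        intro h
        have hl : l < n := by omega
        exact hup l (by omega) h (ih hl)
    have hmemhi : ∀ i : Fin n, 1 ≤ i.val → (i ∈ A ↔ m ≤ i.val) := by
      intro i hi
      constructor
      · intro hiA
        have hie : i ∈ A.erase z :=
          Finset.mem_erase.mpr ⟨fun h => by rw [h, hzv] at hi; omega, hiA⟩
        have hE : (A.erase z).Nonempty := ⟨i, hie⟩
        have hle := Finset.min'_le _ i hie
        rw [hm, dif_pos hE]
        exact Fin.le_def.mp hle
      · intro hmi
        have := hupmem i.val hmi i.isLt
        simpa [Fin.eta] using this
    have herase : A.erase z = univ.filter (fun i : Fin n => m ≤ i.val) := by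
      ext i
      simp only [Finset.mem_erase, Finset.mem_filter, Finset.mem_univ, true_and]
      constructor
      · rintro ⟨hiz, hiA⟩
        have h1 : 1 ≤ i.val := by
          rcases Nat.eq_zero_or_pos i.val with h0 | h1
          · exact absurd (Fin.ext (h0.trans hzv.symm)) hiz
          · exact h1
        exact (hmemhi i h1).mp hiA
      · intro hmi
        have h1 : 1 ≤ i.val := le_trans hm1 hmi
        exact ⟨fun h => by rw [h, hzv] at h1; omega, (hmemhi i h1).mpr hmi⟩
    have hcarde : (A.erase z).card = n - m := by rw [herase, cardf]
    by_cases hzA : z ∈ A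
    · have hcA : A.card = n - m + 1 := by
        have h1 := Finset.card_erase_of_mem hzA
        have h2 : 1 ≤ A.card := Finset.card_pos.mpr ⟨z, hzA⟩
        omega
      by_cases hm1' : m = 1
      · refine Or.inr (Or.inl ?_)
        apply Finset.eq_univ_of_forall
        intro i
        rcases Nat.eq_zero_or_pos i.val with h0 | h1
        · have hiz : i = z := Fin.ext (h0.trans hzv.symm)
          rw [hiz]; exact hzA
        · exact (hmemhi i h1).mpr (by omega)
      · have hm2 : 2 ≤ m := by omega
        have hge : n + 2 ≤ 2 * m := by
          by_contra hlt
          push_neg at hlt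
          have hv : n - m + 1 < n := by omega
          have hmem : (⟨n - m + 1, hv⟩ : Fin n) ∈ A :=
            (hmemhi ⟨n - m + 1, hv⟩ (show 1 ≤ n - m + 1 by omega)).mpr
              (show m ≤ n - m + 1 by omega)
          have key : f ⟨n - m + 1, hv⟩ = f z := by
            rw [hf, hf, if_pos hmem, if_pos hzA, if_pos hzv,
              if_neg (show ¬(n - m + 1 = 0) by omega), hcA, hzv]
            push_cast
            omega
          have h0 : n - m + 1 = 0 := by
            have := hinj key
            rw [Fin.ext_iff, hzv] at this
            exact this
          omega
        have hle2 : 2 * m ≤ n + 2 := by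
          by_contra hlt
          push_neg at hlt
          have hv : n - m + 2 < n := by omega
          have hnmem : (⟨n - m + 2, hv⟩ : Fin n) ∉ A := fun hmem =>
            absurd ((hmemhi ⟨n - m + 2, hv⟩ (show 1 ≤ n - m + 2 by omega)).mp hmem)
              (show ¬(m ≤ n - m + 2) by omega)
          have key : f ⟨n - m + 2, hv⟩ = f z := by
            rw [hf, hf, if_neg hnmem, if_pos hzA, if_pos hzv,
              if_neg (show ¬(n - m + 2 = 0) by omega), hcA, hzv]
            push_cast
            omega
          have h0 : n - m + 2 = 0 := by
            have := hinj key
            rw [Fin.ext_iff, hzv] at this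
            exact this
          omega
        have h2m : 2 * m = n + 2 := by omega
        refine Or.inr (Or.inr ⟨by omega, Or.inr ?_⟩)
        ext i
        simp only [Finset.mem_filter, Finset.mem_univ, true_and]
        constructor
        · intro hiA
          rcases Nat.eq_zero_or_pos i.val with h0 | h1
          · exact Or.inl h0
          · refine Or.inr ?_
            have := (hmemhi i h1).mp hiA
            omega
        · rintro (h0 | h1)
          · have hiz : i = z := Fin.ext (h0.trans hzv.symm)
            rw [hiz]; exact hzA
          · exact (hmemhi i (by omega)).mpr (by omega)
    · have hcA : A.card = n - m := by
        rw [Finset.erase_eq_of_notMem hzA] at hcarde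
        exact hcarde
      by_cases hm' : m = n
      · refine Or.inl ?_
        ext i
        simp only [Finset.notMem_empty, iff_false]
        intro hiA
        rcases Nat.eq_zero_or_pos i.val with h0 | h1
        · have hiz : i = z := Fin.ext (h0.trans hzv.symm)
          rw [hiz] at hiA
          exact hzA hiA
        · have h2 := (hmemhi i h1).mp hiA
          have h3 := i.isLt
          omega
      · have hmlt : m < n := lt_of_le_of_ne hmn hm'
        have hge : 2 * m ≤ n := by
          by_contra hlt
          push_neg at hlt
          have hv : n - m < n := by omega
          have hnmem : (⟨n - m, hv⟩ : Fin n) ∉ A := fun hmem =>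
            absurd ((hmemhi ⟨n - m, hv⟩ (show 1 ≤ n - m by omega)).mp hmem)
              (show ¬(m ≤ n - m) by omega)
          have key : f ⟨n - m, hv⟩ = f z := by
            rw [hf, hf, if_neg hnmem, if_neg hzA, if_pos hzv,
              if_neg (show ¬(n - m = 0) by omega), hcA, hzv]
            push_cast
            omega
          have h0 : n - m = 0 := by
            have := hinj key
            rw [Fin.ext_iff, hzv] at this
            exact this
          omega
        have hle2 : n ≤ 2 * m := by
          by_contra hlt
          push_neg at hlt
          have hv : n - m - 1 < n := by omega
          have hmm : (⟨n - m - 1, hv⟩ : Fin n) ∈ A :=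
            (hmemhi ⟨n - m - 1, hv⟩ (show 1 ≤ n - m - 1 by omega)).mpr
              (show m ≤ n - m - 1 by omega)
          have key : f ⟨n - m - 1, hv⟩ = f z := by
            rw [hf, hf, if_pos hmm, if_neg hzA, if_pos hzv,
              if_neg (show ¬(n - m - 1 = 0) by omega), hcA, hzv]
            push_cast
            omega
          have h0 : n - m - 1 = 0 := by
            have := hinj key
            rw [Fin.ext_iff, hzv] at this
            exact this
          omega
        have h2m : 2 * m = n := by omega
        refine Or.inr (Or.inr ⟨by omega, Or.inl ?_⟩)
        ext i
        simp only [Finset.mem_filter, Finset.mem_univ, true_and]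
        constructor
        · intro hiA
          have h1 : 1 ≤ i.val := by
            rcases Nat.eq_zero_or_pos i.val with h0 | h1
            · have hiz : i = z := Fin.ext (h0.trans hzv.symm)
              rw [hiz] at hiA
              exact absurd hiA hzA
            · exact h1
          have := (hmemhi i h1).mp hiA
          omega
        · intro h1
          exact (hmemhi i (by omega)).mpr (by omega)
  · rintro (rfl | rfl | ⟨hev, h01⟩)
    · intro x y hxy
      rw [hf, hf] at hxy
      simp only [Finset.notMem_empty, if_false, Finset.card_empty, Nat.cast_zero] at hxy
      have hx := x.isLt
      have hy := y.isLt
      apply Fin.ext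
      split_ifs at hxy <;> omega
    · intro x y hxy
      rw [hf, hf] at hxy
      simp only [Finset.mem_univ, if_true, Finset.card_univ, Fintype.card_fin] at hxy
      have hx := x.isLt
      have hy := y.isLt
      apply Fin.ext
      split_ifs at hxy <;> omega
    · rcases h01 with rfl | rfl
      · intro x y hxy
        rw [hf, hf, cardf] at hxy
        simp only [Finset.mem_filter, Finset.mem_univ, true_and] at hxy
        have hx := x.isLt
        have hy := y.isLt
        apply Fin.ext
        split_ifs at hxy <;> omega
      · intro x y hxy
        rw [hf, hf, cardA1 n hn] at hxy
        simp only [Finset.mem_filter, Finset.mem_univ, true_and] at hxy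
        have hx := x.isLt
        have hy := y.isLt
        apply Fin.ext
        split_ifs at hxy <;> omega

/-- Expansion `e^{ρ_{n−1}} ∏_{i=1}^n (1 − e^{−ε_1−ε_i}) = Σ_{A⊆{1,…,n}} (−1)^{|A|} e^{λ_A}`
with `λ_A = ρ_{n−1} − Σ_{i∈A}(ε_1+ε_i)`, together with:
(a) if `n` is odd, `λ_A` is regular only for `A = ∅` and `A = {1,…,n}`;
(b) if `n` is even, the regular `λ_A` are exactly those for `A = ∅`, `A = {1,…,n}`,
`A₀ = {n/2+1,…,n}` and `A₁ = {1} ∪ {n/2+2,…,n}`; moreover `λ_{A₀}` and `λ_{A₁}`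
differ by a transposition of coordinates, so their signed contributions to
`Σ_w sgn(w) e^{w(·)}` cancel. -/
theorem thick_regular_terms (n : ℕ) (hn : 2 ≤ n)
    (e : (Fin n → ℤ) → AddMonoidAlgebra ℚ (Fin n → ℤ))
    (he : ∀ v, e v = AddMonoidAlgebra.single v 1)
    (F : (Fin n → ℤ) → AddMonoidAlgebra ℚ (Fin n → ℤ))
    (hF : ∀ μ, F μ = ∑ w : Equiv.Perm (Fin n), ((Equiv.Perm.sign w : ℤ) : ℚ) • e (μ ∘ w.symm))
    (ρn1 : Fin n → ℤ) (hρn1 : ρn1 = fun i => -(i.val : ℤ))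
    (lam : Finset (Fin n) → (Fin n → ℤ))
    (hlam : ∀ A, lam A =
      ρn1 - ∑ i ∈ A, (Pi.single (⟨0, by omega⟩ : Fin n) (1 : ℤ) + Pi.single i 1))
    (A₀ A₁ : Finset (Fin n))
    (hA₀ : A₀ = univ.filter (fun i : Fin n => n / 2 ≤ i.val))
    (hA₁ : A₁ = univ.filter (fun i : Fin n => i.val = 0 ∨ n / 2 + 1 ≤ i.val)) :
    (e ρn1 * ∏ i : Fin n,
        (1 - e (-(Pi.single (⟨0, by omega⟩ : Fin n) 1 + Pi.single i 1)))
      = ∑ A : Finset (Fin n), ((-1 : ℚ) ^ A.card) • e (lam A)) ∧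
    (Odd n → ∀ A : Finset (Fin n), Function.Injective (lam A) → A = ∅ ∨ A = univ) ∧
    (Even n →
      (∀ A : Finset (Fin n),
        Function.Injective (lam A) ↔ (A = ∅ ∨ A = univ ∨ A = A₀ ∨ A = A₁)) ∧
      (∃ i j : Fin n, i ≠ j ∧ lam A₁ = lam A₀ ∘ (Equiv.swap i j)) ∧
      ((-1 : ℚ) ^ A₀.card • F (lam A₀) + (-1 : ℚ) ^ A₁.card • F (lam A₁) = 0)) := by
  classical
  have hval : ∀ (A : Finset (Fin n)) (j : Fin n),
      lam A j = -(j.val : ℤ) - (if j.val = 0 then (A.card : ℤ) else 0)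
        - (if j ∈ A then 1 else 0) := by
    intro A j
    rw [hlam, hρn1]
    simp only [Pi.sub_apply, Finset.sum_apply, Pi.add_apply, Pi.single_apply]
    rw [Finset.sum_add_distrib, Finset.sum_const, Finset.sum_ite_eq]
    have hj : (j = (⟨0, by omega⟩ : Fin n)) ↔ j.val = 0 := by rw [Fin.ext_iff]
    split_ifs <;> simp_all <;> ring
  refine ⟨?_, ?_, ?_⟩
  · -- the product expansion
    set v : Fin n → (Fin n → ℤ) :=
      fun i => Pi.single (⟨0, by omega⟩ : Fin n) (1 : ℤ) + Pi.single i 1 with hv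
    have h1 : ∀ i : Fin n, (1 : AddMonoidAlgebra ℚ (Fin n → ℤ)) - e (-(v i))
        = AddMonoidAlgebra.single (-(v i)) (-1) + 1 := by
      intro i
      rw [he]
      rw [sub_eq_add_neg, add_comm]
      congr 1
      exact (AddMonoidAlgebra.single_neg _ _).symm
    calc e ρn1 * ∏ i : Fin n, (1 - e (-(v i)))
        = AddMonoidAlgebra.single ρn1 1 *
            ∑ A ∈ (univ : Finset (Fin n)).powerset,
              (∏ i ∈ A, AddMonoidAlgebra.single (-(v i)) (-1)) * ∏ i ∈ univ \ A, 1 := by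
          rw [he]
          congr 1
          rw [Finset.prod_congr rfl (fun i _ => h1 i), Finset.prod_add]
      _ = ∑ A : Finset (Fin n), ((-1 : ℚ) ^ A.card) • e (lam A) := by
          rw [Finset.powerset_univ, Finset.mul_sum]
          refine Finset.sum_congr rfl fun A _ => ?_
          rw [Finset.prod_const_one, mul_one, prodsingle, AddMonoidAlgebra.single_mul_single,
            he, AddMonoidAlgebra.smul_single', mul_one, one_mul, hlam]
          congr 1
          rw [sub_eq_add_neg]
          congr 1
          exact Finset.sum_neg_distrib _
  · -- odd case
    intro hodd A hA
    rcases (charlem n hn A (lam A) (hval A)).mp hA with h | h | ⟨hev, _⟩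
    · exact Or.inl h
    · exact Or.inr h
    · rw [Nat.odd_iff] at hodd
      omega
  · -- even case
    intro heven
    subst hA₀
    subst hA₁
    have hev2 : n % 2 = 0 := Nat.even_iff.mp heven
    have hn2 : n / 2 < n := by omega
    set z : Fin n := ⟨0, by omega⟩ with hz
    set w2 : Fin n := ⟨n / 2, hn2⟩ with hw2
    have hzv : z.val = 0 := rfl
    have hw2v : w2.val = n / 2 := rfl
    have hzw : z ≠ w2 := by
      rw [Ne, Fin.ext_iff, hzv, hw2v]
      omega
    have hc0 : (univ.filter (fun i : Fin n => n / 2 ≤ i.val)).card = n - n / 2 := cardf n (n / 2)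
    have hc1 : (univ.filter (fun i : Fin n => i.val = 0 ∨ n / 2 + 1 ≤ i.val)).card = n - n / 2 :=
      cardA1 n hn
    have hswap : lam (univ.filter (fun i : Fin n => i.val = 0 ∨ n / 2 + 1 ≤ i.val))
        = lam (univ.filter (fun i : Fin n => n / 2 ≤ i.val)) ∘ (Equiv.swap z w2) := by
      funext x
      have hx := x.isLt
      simp only [Function.comp_apply]
      by_cases hxz : x = z
      · subst hxz
        rw [Equiv.swap_apply_left, hval, hval]
        simp only [hc0, hc1, Finset.mem_filter, Finset.mem_univ, true_and,
          hzv, hw2v, Fin.val_mk, true_or, if_true]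
        split_ifs <;> omega
      · by_cases hxw : x = w2
        · subst hxw
          rw [Equiv.swap_apply_right, hval, hval]
          simp only [hc0, hc1, Finset.mem_filter, Finset.mem_univ, true_and,
            hzv, hw2v, Fin.val_mk, true_or, if_true]
          split_ifs <;> omega
        · rw [Equiv.swap_apply_of_ne_of_ne hxz hxw, hval, hval]
          simp only [hc0, hc1, Finset.mem_filter, Finset.mem_univ, true_and, Fin.val_mk]
          have hxz' : x.val ≠ 0 := fun h => hxz (Fin.ext (h.trans hzv.symm))
          have hxw' : x.val ≠ n / 2 := fun h => hxw (Fin.ext (h.trans hw2v.symm))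
          split_ifs <;> omega
    refine ⟨?_, ⟨z, w2, hzw, hswap⟩, ?_⟩
    · intro A
      rw [show (Function.Injective (lam A)) ↔ _ from charlem n hn A (lam A) (hval A)]
      constructor
      · rintro (h | h | ⟨_, h | h⟩)
        exacts [Or.inl h, Or.inr (Or.inl h), Or.inr (Or.inr (Or.inl h)),
          Or.inr (Or.inr (Or.inr h))]
      · rintro (h | h | h | h)
        exacts [Or.inl h, Or.inr (Or.inl h), Or.inr (Or.inr ⟨hev2, Or.inl h⟩),
          Or.inr (Or.inr ⟨hev2, Or.inr h⟩)]
    · have hFneg : F (lam (univ.filter (fun i : Fin n => i.val = 0 ∨ n / 2 + 1 ≤ i.val)))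
          = -F (lam (univ.filter (fun i : Fin n => n / 2 ≤ i.val))) := by
        rw [hF, hF, ← Finset.sum_neg_distrib]
        apply Fintype.sum_equiv (Equiv.mulRight (Equiv.swap z w2))
        intro σ
        have h2 : lam (univ.filter (fun i : Fin n => n / 2 ≤ i.val))
              ∘ ⇑((Equiv.mulRight (Equiv.swap z w2)) σ).symm
            = lam (univ.filter (fun i : Fin n => i.val = 0 ∨ n / 2 + 1 ≤ i.val)) ∘ ⇑σ.symm := by
          rw [hswap]
          funext x
          simp only [Function.comp_apply]
          congr 1
        have h1 : ((Equiv.Perm.sign ((Equiv.mulRight (Equiv.swap z w2)) σ) : ℤ) : ℚ)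
            = -((Equiv.Perm.sign σ : ℤ) : ℚ) := by
          simp [Equiv.Perm.sign_mul, Equiv.Perm.sign_swap hzw]
        rw [h2, h1, neg_smul, neg_neg]
      rw [hc0, hc1, hFneg, smul_neg]
      exact add_neg_cancel _
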